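/- arXiv:2411.15660 — 6 statements merged into one kernel-verified Lean document; each statement's English description precedes it below -/
import Mathlib

section
/- Let g_1,...,g_m be i.i.d. standard Gaussian random variables and c_1,...,c_m ≥ 0. Then for any integer l ≥ 0, E[(∑_{i=1}^m c_i g_i²)^l] ≤ (∑_{i=1}^m c_i)^l · E[g^{2l}] where g ~ N(0,1). In particular E[(∑ c_i g_i²)^l] ≤ (C·l·∑ c_i)^l for an absolute constant C > 0. -/
open MeasureTheory ProbabilityTheory

lemma pow_le_factorial_mul_exp {x : ℝ} (hx : 0 ≤ x) (l : ℕ) :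
    x ^ l ≤ l.factorial * Real.exp x := by
  have h1 : x ^ l / l.factorial ≤ Real.exp x := by
    calc x ^ l / l.factorial
        ≤ ∑ i ∈ Finset.range (l + 1), x ^ i / i.factorial := by
          refine Finset.single_le_sum (f := fun i => x ^ i / i.factorial) ?_ ?_
          · intro i _
            positivity
          · exact Finset.self_mem_range_succ l
      _ ≤ Real.exp x := Real.sum_le_exp_of_nonneg hx _
  have hfac : (0 : ℝ) < l.factorial := by positivity
  calc x ^ l = x ^ l / l.factorial * l.factorial := by field_simp
    _ ≤ Real.exp x * l.factorial := by
        exact mul_le_mul_of_nonneg_right h1 hfac.le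
    _ = l.factorial * Real.exp x := mul_comm _ _

lemma integrable_even_pow_gaussianReal (l : ℕ) :
    Integrable (fun x : ℝ => x ^ (2 * l)) (gaussianReal 0 1) := by
  rw [gaussianReal_of_var_ne_zero 0 one_ne_zero]
  rw [integrable_withDensity_iff (measurable_gaussianPDF 0 1)
    (ae_of_all _ fun x => ENNReal.ofReal_lt_top)]
  have hpdf : ∀ x : ℝ, (gaussianPDF 0 1 x).toReal
      = (Real.sqrt (2 * Real.pi))⁻¹ * Real.exp (-x ^ 2 / 2) := by
    intro x
    rw [gaussianPDF_def, ENNReal.toReal_ofReal (gaussianPDFReal_nonneg 0 1 x)]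
    simp [gaussianPDFReal]
  set K : ℝ := (Real.sqrt (2 * Real.pi))⁻¹ * (4 ^ l * l.factorial) with hK
  have hmaj : Integrable (fun x : ℝ => K * Real.exp (-(1/4 : ℝ) * x ^ 2)) := by
    exact (integrable_exp_neg_mul_sq (by norm_num : (0:ℝ) < 1/4)).const_mul K
  refine hmaj.mono' ?_ ?_
  · apply Measurable.aestronglyMeasurable
    exact (measurable_id'.pow_const _).mul
      (measurable_gaussianPDF 0 1).ennreal_toReal
  · filter_upwards with x
    rw [hpdf x, Real.norm_eq_abs, abs_mul, abs_mul]
    have h2 : x ^ (2 * l) = (x ^ 2) ^ l := by rw [← pow_mul]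
    have hx2 : (0:ℝ) ≤ x ^ 2 := sq_nonneg x
    have hb : (x ^ 2) ^ l ≤ 4 ^ l * l.factorial * Real.exp (x ^ 2 / 4) := by
      have := pow_le_factorial_mul_exp (x := x ^ 2 / 4) (by positivity) l
      have h4 : (x ^ 2 / 4) ^ l = (x ^ 2) ^ l / 4 ^ l := by rw [div_pow]
      rw [h4] at this
      rw [div_le_iff₀ (by positivity : (0:ℝ) < 4 ^ l)] at this
      calc (x ^ 2) ^ l ≤ l.factorial * Real.exp (x ^ 2 / 4) * 4 ^ l := this
        _ = 4 ^ l * l.factorial * Real.exp (x ^ 2 / 4) := by ring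
    have habs1 : |x ^ (2 * l)| = (x ^ 2) ^ l := by
      rw [h2, abs_of_nonneg (pow_nonneg hx2 l)]
    have habs2 : |(Real.sqrt (2 * Real.pi))⁻¹| = (Real.sqrt (2 * Real.pi))⁻¹ := by
      rw [abs_of_nonneg]; positivity
    have habs3 : |Real.exp (-x ^ 2 / 2)| = Real.exp (-x ^ 2 / 2) :=
      abs_of_nonneg (Real.exp_pos _).le
    rw [habs1, habs2, habs3]
    have hexp : Real.exp (x ^ 2 / 4) * Real.exp (-x ^ 2 / 2)
        = Real.exp (-(1/4 : ℝ) * x ^ 2) := by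
      rw [← Real.exp_add]; ring_nf
    calc (x ^ 2) ^ l * ((Real.sqrt (2 * Real.pi))⁻¹ * Real.exp (-x ^ 2 / 2))
        ≤ 4 ^ l * l.factorial * Real.exp (x ^ 2 / 4)
            * ((Real.sqrt (2 * Real.pi))⁻¹ * Real.exp (-x ^ 2 / 2)) := by
          refine mul_le_mul_of_nonneg_right hb ?_
          positivity
      _ = K * (Real.exp (x ^ 2 / 4) * Real.exp (-x ^ 2 / 2)) := by rw [hK]; ring
      _ = K * Real.exp (-(1/4 : ℝ) * x ^ 2) := by rw [hexp]

/-- Let `g 1, ..., g m` be i.i.d. standard Gaussians and `c i ≥ 0`. Then for any `l : ℕ`,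
`E[(∑ i, c i * (g i)²)^l] ≤ (∑ i, c i)^l * E[g^{2l}]` where `g ~ N(0,1)`; in particular,
if `E[g^{2l}] ≤ (C·l)^l` then `E[(∑ i, c i * (g i)²)^l] ≤ (C·l·∑ i, c i)^l`. -/
theorem gaussian_weighted_chi_square_moment
    {Ω : Type*} [MeasurableSpace Ω] (μ : Measure Ω) [IsProbabilityMeasure μ]
    (m : ℕ) (g : Fin m → Ω → ℝ) (c : Fin m → ℝ) (hc : ∀ i, 0 ≤ c i)
    (hmeas : ∀ i, Measurable (g i))
    (hlaw : ∀ i, Measure.map (g i) μ = gaussianReal 0 1)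
    (hindep : iIndepFun g μ)
    (l : ℕ) (C : ℝ) (hC : 0 < C) :
    (∫ ω, (∑ i, c i * (g i ω) ^ 2) ^ l ∂μ
        ≤ (∑ i, c i) ^ l * ∫ x, x ^ (2 * l) ∂(gaussianReal 0 1))
    ∧ ((∫ x, x ^ (2 * l) ∂(gaussianReal 0 1)) ≤ (C * l) ^ l →
        ∫ ω, (∑ i, c i * (g i ω) ^ 2) ^ l ∂μ ≤ (C * l * ∑ i, c i) ^ l) := by
  set S : ℝ := ∑ i, c i with hS
  have hS0 : 0 ≤ S := Finset.sum_nonneg fun i _ => hc i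
  set M : ℝ := ∫ x, x ^ (2 * l) ∂(gaussianReal 0 1) with hM
  have hM0 : 0 ≤ M := by
    refine integral_nonneg fun x => ?_
    rw [pow_mul]
    exact pow_nonneg (sq_nonneg x) l
  -- integrability of each g i ^ (2l)
  have hIntg : ∀ i, Integrable (fun ω => (g i ω) ^ (2 * l)) μ := by
    intro i
    have h := integrable_even_pow_gaussianReal l
    rw [← hlaw i] at h
    rw [integrable_map_measure (Measurable.aestronglyMeasurable (by measurability))
      (hmeas i).aemeasurable] at h
    exact h
  have hIntM : ∀ i, ∫ ω, (g i ω) ^ (2 * l) ∂μ = M := by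
    intro i
    rw [hM, ← hlaw i, integral_map (hmeas i).aemeasurable
      (Measurable.aestronglyMeasurable (by measurability))]
  have h1 : ∫ ω, (∑ i, c i * (g i ω) ^ 2) ^ l ∂μ ≤ S ^ l * M := by
    by_cases hl : l = 0
    · subst hl
      simp only [pow_zero, one_mul, hM, mul_zero, integral_const, measure_univ,
        ENNReal.toReal_one, smul_eq_mul, mul_one]
      simp
    by_cases hSzero : S = 0
    · have hc0 : ∀ i ∈ Finset.univ, c i = 0 :=
        (Finset.sum_eq_zero_iff_of_nonneg fun i _ => hc i).mp (by rw [← hS]; exact hSzero)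
      have : ∀ ω, (∑ i, c i * (g i ω) ^ 2) ^ l = 0 := by
        intro ω
        rw [Finset.sum_eq_zero fun i hi => by rw [hc0 i hi, zero_mul],
          zero_pow hl]
      simp only [this]
      rw [integral_zero, hSzero, zero_pow hl, zero_mul]
    have hSpos : 0 < S := lt_of_le_of_ne hS0 (Ne.symm hSzero)
    -- pointwise Jensen
    have key : ∀ ω, (∑ i, c i * (g i ω) ^ 2) ^ l
        ≤ S ^ l * ∑ i, (c i / S) * (g i ω) ^ (2 * l) := by
      intro ω
      have hw0 : ∀ i ∈ Finset.univ, 0 ≤ c i / S := fun i _ => div_nonneg (hc i) hS0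
      have hw1 : ∑ i : Fin m, c i / S = 1 := by
        rw [← Finset.sum_div, ← hS, div_self hSzero]
      have hmem : ∀ i ∈ Finset.univ, (g i ω) ^ 2 ∈ Set.Ici (0:ℝ) :=
        fun i _ => Set.mem_Ici.mpr (sq_nonneg _)
      have hj := (convexOn_pow l).map_sum_le hw0 hw1 hmem
      simp only [smul_eq_mul] at hj
      have hsum : ∑ i : Fin m, (c i / S) * (g i ω) ^ 2
          = (∑ i, c i * (g i ω) ^ 2) / S := by
        rw [Finset.sum_div]
        congr 1; ext i; ring
      rw [hsum] at hj
      have hpow : ((∑ i, c i * (g i ω) ^ 2) / S) ^ l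
          = (∑ i, c i * (g i ω) ^ 2) ^ l / S ^ l := div_pow _ _ _
      rw [hpow] at hj
      have := mul_le_mul_of_nonneg_left hj (pow_nonneg hS0 l)
      rw [mul_div_cancel₀ _ (pow_ne_zero l hSzero)] at this
      calc (∑ i, c i * (g i ω) ^ 2) ^ l
          ≤ S ^ l * ∑ i, (c i / S) * ((g i ω) ^ 2) ^ l := this
        _ = S ^ l * ∑ i, (c i / S) * (g i ω) ^ (2 * l) := by
            congr 1; apply Finset.sum_congr rfl; intro i _
            rw [← pow_mul]
    have hIntRHS : Integrable
        (fun ω => S ^ l * ∑ i, (c i / S) * (g i ω) ^ (2 * l)) μ := by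
      exact (integrable_finset_sum _ fun i _ => (hIntg i).const_mul _).const_mul _
    have hle := integral_mono_of_nonneg
      (f := fun ω => (∑ i, c i * (g i ω) ^ 2) ^ l)
      (g := fun ω => S ^ l * ∑ i, (c i / S) * (g i ω) ^ (2 * l))
      (ae_of_all _ fun ω => pow_nonneg
        (Finset.sum_nonneg fun i _ => mul_nonneg (hc i) (sq_nonneg _)) l)
      hIntRHS (ae_of_all _ key)
    refine hle.trans ?_
    rw [integral_const_mul, integral_finset_sum _ fun i _ => (hIntg i).const_mul _]
    have : ∑ i : Fin m, ∫ ω, (c i / S) * (g i ω) ^ (2 * l) ∂μ = M := by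
      calc ∑ i : Fin m, ∫ ω, (c i / S) * (g i ω) ^ (2 * l) ∂μ
          = ∑ i : Fin m, (c i / S) * M := by
            apply Finset.sum_congr rfl; intro i _
            rw [integral_const_mul, hIntM i]
        _ = (∑ i : Fin m, c i / S) * M := by rw [Finset.sum_mul]
        _ = 1 * M := by rw [← Finset.sum_div, ← hS, div_self hSzero]
        _ = M := one_mul M
    rw [this]
  refine ⟨h1, fun hMle => ?_⟩
  calc ∫ ω, (∑ i, c i * (g i ω) ^ 2) ^ l ∂μ
      ≤ S ^ l * M := h1
    _ ≤ S ^ l * (C * l) ^ l := mul_le_mul_of_nonneg_left hMle (pow_nonneg hS0 l)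
    _ = (C * l * S) ^ l := by rw [mul_pow]; ring
end

section
/- Let X be a real random variable such that P(|X| ≥ max{a+bt, √(a+bt)}) ≤ e^{−t} for all t > 0, where 0 < a < 1 and b > 0. Then E[X²] ≤ a + b + 2ab + 2b². -/
open MeasureTheory Set Filter Topology

private lemma my_sqrt_tendsto_atTop : Tendsto Real.sqrt atTop atTop := by
  refine tendsto_atTop_atTop.2 fun x => ⟨(max x 0) ^ 2, fun y hy => ?_⟩
  calc x ≤ max x 0 := le_max_left _ _
    _ = Real.sqrt ((max x 0) ^ 2) := (Real.sqrt_sq (le_max_right _ _)).symm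
    _ ≤ Real.sqrt y := Real.sqrt_le_sqrt hy

private lemma my_sqrt_le_self {x : ℝ} (hx : 1 ≤ x) : Real.sqrt x ≤ x := by
  calc Real.sqrt x ≤ Real.sqrt (x ^ 2) := Real.sqrt_le_sqrt (by nlinarith)
    _ = x := Real.sqrt_sq (by linarith)

private lemma my_hasDerivAt_F (a b : ℝ) (hb : 0 < b) {t : ℝ} (ht : 0 < t) :
    HasDerivAt (fun t => -2 * b * (Real.sqrt t + b) * Real.exp ((a - Real.sqrt t) / b))
      (Real.exp ((a - Real.sqrt t) / b)) t := by
  have hst : (0:ℝ) < Real.sqrt t := Real.sqrt_pos.2 ht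
  have hs : HasDerivAt Real.sqrt (1 / (2 * Real.sqrt t)) t := Real.hasDerivAt_sqrt (ne_of_gt ht)
  have h1 : HasDerivAt (fun t => (a - Real.sqrt t) / b) (-(1 / (2 * Real.sqrt t)) / b) t := by
    have := ((hasDerivAt_const t a).sub hs).div_const b
    simpa using this
  have he := h1.exp
  have hmul : HasDerivAt (fun t => -2 * b * (Real.sqrt t + b))
      (-2 * b * (1 / (2 * Real.sqrt t))) t :=
    (hs.add_const b).const_mul (-2 * b)
  have hprod := hmul.mul he
  refine hprod.congr_deriv ?_
  field_simp
  ring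

private lemma my_tendsto_F (a b : ℝ) (hb : 0 < b) :
    Tendsto (fun t => -2 * b * (Real.sqrt t + b) * Real.exp ((a - Real.sqrt t) / b))
      atTop (𝓝 0) := by
  have hdiv : Tendsto (fun x : ℝ => x / b) atTop atTop :=
    tendsto_id.atTop_div_const hb
  have h1 : Tendsto (fun x : ℝ => (x / b) * Real.exp (-(x / b))) atTop (𝓝 0) := by
    have h := Real.tendsto_pow_mul_exp_neg_atTop_nhds_zero 1
    simp only [pow_one] at h
    exact h.comp hdiv
  have h2 : Tendsto (fun x : ℝ => Real.exp (-(x / b))) atTop (𝓝 0) :=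
    Real.tendsto_exp_atBot.comp (tendsto_neg_atTop_atBot.comp hdiv)
  have hG : Tendsto (fun x : ℝ => -2 * b * (x + b) * Real.exp ((a - x) / b)) atTop (𝓝 0) := by
    have key : ∀ x : ℝ, -2 * b * (x + b) * Real.exp ((a - x) / b) =
        (-2 * b * Real.exp (a / b)) *
          (b * ((x / b) * Real.exp (-(x / b))) + b * Real.exp (-(x / b))) := by
      intro x
      rw [show (a - x) / b = a / b + -(x / b) by field_simp; ring, Real.exp_add]
      field_simp
    have h3 := ((h1.const_mul b).add (h2.const_mul b)).const_mul (-2 * b * Real.exp (a / b))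
    simp only [mul_zero, add_zero] at h3
    exact Tendsto.congr (fun x => (key x).symm) h3
  exact hG.comp my_sqrt_tendsto_atTop

/-- Second moment bound under a mixed tail: if
`P(|X| ≥ max{a+bt, √(a+bt)}) ≤ e^{−t}` for all `t > 0`, with `0 < a < 1`, `b > 0`,
then `E[X²] ≤ a + b + 2ab + 2b²`. -/
theorem second_moment_of_mixed_tail
    {Ω : Type*} [MeasurableSpace Ω] (μ : Measure Ω) [IsProbabilityMeasure μ]
    (X : Ω → ℝ) (hX : Measurable X)
    (a b : ℝ) (ha0 : 0 < a) (ha1 : a < 1) (hb : 0 < b)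
    (htail : ∀ t > 0,
      μ {ω | max (a + b * t) (Real.sqrt (a + b * t)) ≤ |X ω|}
        ≤ ENNReal.ofReal (Real.exp (-t))) :
    ∫ ω, (X ω) ^ 2 ∂μ ≤ a + b + 2 * a * b + 2 * b ^ 2 := by
  set h : ℝ → ℝ := fun t => min 1 (Real.exp ((a - min t (Real.sqrt t)) / b)) with hh_def
  have h_cont : Continuous h :=
    continuous_const.min
      (((continuous_const.sub (continuous_id.min Real.continuous_sqrt)).div_const b).rexp)
  have h_meas : Measurable h := h_cont.measurable
  have h_nonneg : ∀ t, 0 ≤ h t := fun t => le_min zero_le_one (Real.exp_pos _).le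
  have h_le_one : ∀ t, h t ≤ 1 := fun t => min_le_left _ _
  -- pointwise tail bound
  have tail_le : ∀ t ∈ Ioi (0:ℝ), μ {ω | t ≤ (X ω) ^ 2} ≤ ENNReal.ofReal (h t) := by
    intro t ht
    replace ht : 0 < t := ht
    by_cases hta : t ≤ a
    · have h1 : (1:ℝ) ≤ Real.exp ((a - min t (Real.sqrt t)) / b) := by
        apply Real.one_le_exp
        have hmt : min t (Real.sqrt t) ≤ t := min_le_left _ _
        have : 0 ≤ a - min t (Real.sqrt t) := by linarith
        positivity
      have heq : h t = 1 := min_eq_left h1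
      rw [heq, ENNReal.ofReal_one]
      exact prob_le_one
    · push_neg at hta
      set m := min t (Real.sqrt t) with hm_def
      have ham : a < m := by
        rcases le_total t 1 with h1 | h1
        · have : t ≤ Real.sqrt t := (Real.le_sqrt ht.le ht.le).2 (by nlinarith)
          rw [hm_def, min_eq_left this]; exact hta
        · have h1' : (1:ℝ) ≤ Real.sqrt t := Real.one_le_sqrt.2 h1
          calc a < 1 := ha1
            _ ≤ m := le_min h1 h1'
      have hmax : max m (Real.sqrt m) = Real.sqrt t := by
        rcases le_total t 1 with h1 | h1
        · have htsq : t ≤ Real.sqrt t := (Real.le_sqrt ht.le ht.le).2 (by nlinarith)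
          rw [hm_def, min_eq_left htsq]
          exact max_eq_right htsq
        · have h1' : (1:ℝ) ≤ Real.sqrt t := Real.one_le_sqrt.2 h1
          have h2' : Real.sqrt t ≤ t := my_sqrt_le_self h1
          rw [hm_def, min_eq_right h2']
          exact max_eq_left (my_sqrt_le_self h1')
      set s := (m - a) / b with hs_def
      have hs : 0 < s := div_pos (by linarith) hb
      have habs : a + b * s = m := by rw [hs_def]; field_simp; ring
      have hsub : {ω | t ≤ (X ω) ^ 2} ⊆
          {ω | max (a + b * s) (Real.sqrt (a + b * s)) ≤ |X ω|} := by
        intro ω hω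
        simp only [Set.mem_setOf_eq] at hω ⊢
        rw [habs, hmax]
        calc Real.sqrt t ≤ Real.sqrt ((X ω) ^ 2) := Real.sqrt_le_sqrt hω
          _ = |X ω| := Real.sqrt_sq_eq_abs _
      have hb1 : μ {ω | t ≤ (X ω) ^ 2} ≤ ENNReal.ofReal (Real.exp (-s)) :=
        (measure_mono hsub).trans (htail s hs)
      have hexp : Real.exp (-s) = Real.exp ((a - m) / b) := by
        congr 1
        rw [hs_def]
        ring
      rcases le_total (Real.exp ((a - m) / b)) 1 with hc | hc
      · have heq : h t = Real.exp ((a - m) / b) := min_eq_right hc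
        rw [heq, ← hexp]
        exact hb1
      · have heq : h t = 1 := min_eq_left hc
        rw [heq, ENNReal.ofReal_one]
        exact prob_le_one
  -- comparison with the explicit exponential on (1, ∞)
  have hE_eq : ∀ t ∈ Ioi (1:ℝ), h t ≤ Real.exp ((a - Real.sqrt t) / b) := by
    intro t ht
    have hmin : min t (Real.sqrt t) = Real.sqrt t :=
      min_eq_right (my_sqrt_le_self (le_of_lt ht))
    calc h t ≤ Real.exp ((a - min t (Real.sqrt t)) / b) := min_le_right _ _
      _ = Real.exp ((a - Real.sqrt t) / b) := by rw [hmin]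
  have hderiv : ∀ t ∈ Ici (1:ℝ), HasDerivAt
      (fun t => -2 * b * (Real.sqrt t + b) * Real.exp ((a - Real.sqrt t) / b))
      (Real.exp ((a - Real.sqrt t) / b)) t :=
    fun t ht => my_hasDerivAt_F a b hb (lt_of_lt_of_le one_pos ht)
  have hEint : IntegrableOn (fun t => Real.exp ((a - Real.sqrt t) / b)) (Ioi (1:ℝ)) :=
    integrableOn_Ioi_deriv_of_nonneg' hderiv (fun t _ => (Real.exp_pos _).le)
      (my_tendsto_F a b hb)
  have hEval : ∫ t in Ioi (1:ℝ), Real.exp ((a - Real.sqrt t) / b)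
      = 2 * b * (1 + b) * Real.exp ((a - 1) / b) := by
    have hcalc := integral_Ioi_of_hasDerivAt_of_nonneg' hderiv (fun t _ => (Real.exp_pos _).le)
      (my_tendsto_F a b hb)
    rw [hcalc, Real.sqrt_one]
    ring
  -- integrability of h on (0, ∞)
  have h_int1 : IntegrableOn h (Ioc (0:ℝ) 1) := h_cont.integrableOn_Ioc
  have h_int2 : IntegrableOn h (Ioi (1:ℝ)) := by
    apply Integrable.mono' hEint h_cont.aestronglyMeasurable.restrict
    filter_upwards [ae_restrict_mem measurableSet_Ioi] with t ht
    rw [Real.norm_eq_abs, abs_of_nonneg (h_nonneg t)]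
    exact hE_eq t ht
  have h_int : IntegrableOn h (Ioi (0:ℝ)) := by
    rw [show Ioi (0:ℝ) = Ioc 0 1 ∪ Ioi 1 from (Ioc_union_Ioi_eq_Ioi zero_le_one).symm]
    exact h_int1.union h_int2
  -- split the integral
  have hI_split : ∫ t in Ioi (0:ℝ), h t = (∫ t in Ioc (0:ℝ) 1, h t) + ∫ t in Ioi (1:ℝ), h t := by
    rw [← setIntegral_union Ioc_disjoint_Ioi_same measurableSet_Ioi h_int1 h_int2,
      Ioc_union_Ioi_eq_Ioi zero_le_one]
  have split01 : ∫ t in Ioc (0:ℝ) 1, h t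
      = (∫ t in Ioc (0:ℝ) a, h t) + ∫ t in Ioc a 1, h t := by
    rw [← setIntegral_union (Ioc_disjoint_Ioc_of_le le_rfl) measurableSet_Ioc
      (h_int1.mono_set (Ioc_subset_Ioc_right ha1.le))
      (h_int1.mono_set (Ioc_subset_Ioc_left ha0.le)),
      Ioc_union_Ioc_eq_Ioc ha0.le ha1.le]
  -- bound on (0, a]
  have hIa : ∫ t in Ioc (0:ℝ) a, h t ≤ a := by
    calc ∫ t in Ioc (0:ℝ) a, h t ≤ ∫ _t in Ioc (0:ℝ) a, (1:ℝ) :=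
        setIntegral_mono_on (h_int1.mono_set (Ioc_subset_Ioc_right ha1.le))
          (integrableOn_const (by simp [Real.volume_Ioc, measure_lt_top]))
          measurableSet_Ioc (fun x _ => h_le_one x)
      _ = a := by simp [Real.volume_Ioc, ENNReal.toReal_ofReal ha0.le, ha0.le]
  -- bound on (a, 1]
  have hIb : ∫ t in Ioc a 1, h t ≤ b := by
    have hcontE : Continuous (fun t : ℝ => Real.exp ((a - t) / b)) :=
      ((continuous_const.sub continuous_id).div_const b).rexp
    have key : ∫ t in Ioc a 1, Real.exp ((a - t) / b) = b - b * Real.exp ((a - 1) / b) := by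
      rw [← intervalIntegral.integral_of_le ha1.le]
      have hder : ∀ t ∈ Set.uIcc a 1,
          HasDerivAt (fun t => -b * Real.exp ((a - t) / b)) (Real.exp ((a - t) / b)) t := by
        intro t _
        have h1 : HasDerivAt (fun t : ℝ => (a - t) / b) (-1 / b) t := by
          have := ((hasDerivAt_const t a).sub (hasDerivAt_id t)).div_const b
          simpa using this
        have h2 := h1.exp.const_mul (-b)
        refine h2.congr_deriv ?_
        field_simp
      rw [intervalIntegral.integral_eq_sub_of_hasDerivAt hder
        (hcontE.intervalIntegrable a 1)]
      have : a - a = 0 := by ring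
      simp [this]
      ring
    have hmono2 : ∫ t in Ioc a 1, h t ≤ ∫ t in Ioc a 1, Real.exp ((a - t) / b) := by
      apply setIntegral_mono_on (h_int1.mono_set (Ioc_subset_Ioc_left ha0.le))
        (hcontE.integrableOn_Ioc) measurableSet_Ioc
      intro t htm
      have ht0 : 0 < t := lt_trans ha0 htm.1
      have hmin : min t (Real.sqrt t) = t :=
        min_eq_left ((Real.le_sqrt ht0.le ht0.le).2 (by nlinarith [htm.2]))
      calc h t ≤ Real.exp ((a - min t (Real.sqrt t)) / b) := min_le_right _ _
        _ = Real.exp ((a - t) / b) := by rw [hmin]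
    have := Real.exp_pos ((a - 1) / b)
    rw [key] at hmono2
    nlinarith
  -- bound on (1, ∞)
  have hIc : ∫ t in Ioi (1:ℝ), h t ≤ 2 * a * b + 2 * b ^ 2 := by
    have step1 : ∫ t in Ioi (1:ℝ), h t ≤ ∫ t in Ioi (1:ℝ), Real.exp ((a - Real.sqrt t) / b) :=
      setIntegral_mono_on h_int2 hEint measurableSet_Ioi hE_eq
    have h0 : 0 < b + 1 - a := by linarith
    have hexp_bound : Real.exp ((a - 1) / b) ≤ b / (b + 1 - a) := by
      have h1 : (1 - a) / b + 1 ≤ Real.exp ((1 - a) / b) := Real.add_one_le_exp _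
      have h2 : b + 1 - a ≤ b * Real.exp ((1 - a) / b) := by
        have h3 : b * ((1 - a) / b + 1) ≤ b * Real.exp ((1 - a) / b) :=
          mul_le_mul_of_nonneg_left h1 hb.le
        have h4 : b * ((1 - a) / b + 1) = b + 1 - a := by field_simp; ring
        linarith
      rw [show (a - 1) / b = -((1 - a) / b) by ring, Real.exp_neg,
        inv_le_iff_one_le_mul₀ (Real.exp_pos _), div_mul_eq_mul_div, le_div_iff₀ h0]
      calc (1:ℝ) * (b + 1 - a) = b + 1 - a := one_mul _
        _ ≤ b * Real.exp ((1 - a) / b) := h2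
    have step2 : 2 * b * (1 + b) * Real.exp ((a - 1) / b)
        ≤ 2 * b * (1 + b) * (b / (b + 1 - a)) :=
      mul_le_mul_of_nonneg_left hexp_bound (by positivity)
    have step3 : 2 * b * (1 + b) * (b / (b + 1 - a)) ≤ 2 * a * b + 2 * b ^ 2 := by
      rw [← mul_div_assoc, div_le_iff₀ h0]
      nlinarith [mul_pos ha0 hb, mul_pos ha0 (sub_pos.2 ha1)]
    calc ∫ t in Ioi (1:ℝ), h t ≤ ∫ t in Ioi (1:ℝ), Real.exp ((a - Real.sqrt t) / b) := step1
      _ = 2 * b * (1 + b) * Real.exp ((a - 1) / b) := hEval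
      _ ≤ 2 * a * b + 2 * b ^ 2 := step2.trans step3
  have hI_le : ∫ t in Ioi (0:ℝ), h t ≤ a + b + 2 * a * b + 2 * b ^ 2 := by
    rw [hI_split, split01]
    linarith
  -- layer cake and conclusion
  have layer : ∫⁻ ω, ENNReal.ofReal ((X ω) ^ 2) ∂μ = ∫⁻ t in Ioi 0, μ {ω | t ≤ (X ω) ^ 2} :=
    lintegral_eq_lintegral_meas_le μ (ae_of_all μ fun ω => sq_nonneg (X ω))
      ((hX.pow_const 2).aemeasurable)
  have hmono : ∫⁻ t in Ioi (0:ℝ), μ {ω | t ≤ (X ω) ^ 2}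
      ≤ ∫⁻ t in Ioi (0:ℝ), ENNReal.ofReal (h t) :=
    setLIntegral_mono (ENNReal.measurable_ofReal.comp h_meas) tail_le
  have heq : ∫⁻ t in Ioi (0:ℝ), ENNReal.ofReal (h t)
      = ENNReal.ofReal (∫ t in Ioi (0:ℝ), h t) :=
    (ofReal_integral_eq_lintegral_ofReal h_int (ae_of_all _ h_nonneg)).symm
  have hlint_le : ∫⁻ ω, ENNReal.ofReal ((X ω) ^ 2) ∂μ
      ≤ ENNReal.ofReal (a + b + 2 * a * b + 2 * b ^ 2) := by
    rw [layer]
    exact hmono.trans (heq.le.trans (ENNReal.ofReal_le_ofReal hI_le))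
  rw [integral_eq_lintegral_of_nonneg_ae (ae_of_all μ fun ω => sq_nonneg (X ω))
    (hX.pow_const 2).aestronglyMeasurable]
  exact ENNReal.toReal_le_of_le_ofReal
    (by nlinarith [mul_pos ha0 hb, sq_nonneg b]) hlint_le
end

section
/- Let X be a real random variable such that P(|X| ≥ max{a+bt, √(a+bt)}) ≤ e^{−t} for all t > 0, where 0 < a < 1 and b > 0. Then E[X⁴] ≤ a² + 2ab + 2b² + 16a³b + 96b⁴. -/
open MeasureTheory Filter Set Topology

lemma cube_add_le_aux (x y : ℝ) (hx : 0 ≤ x) (hy : 0 ≤ y) :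
    (x + y) ^ 3 ≤ 4 * x ^ 3 + 4 * y ^ 3 := by
  nlinarith [mul_nonneg (add_nonneg hx hy) (sq_nonneg (x - y)), mul_nonneg hx hy,
    sq_nonneg (x - y), sq_nonneg (x + y)]

/-- Fourth moment bound under a mixed tail: if
`P(|X| ≥ max{a+bt, √(a+bt)}) ≤ e^{−t}` for all `t > 0`, with `0 < a < 1`, `b > 0`,
then `E[X⁴] ≤ a² + 2ab + 2b² + 16a³b + 96b⁴`. -/
theorem fourth_moment_of_mixed_tail
    {Ω : Type*} [MeasurableSpace Ω] (μ : Measure Ω) [IsProbabilityMeasure μ]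
    (X : Ω → ℝ) (hX : Measurable X)
    (a b : ℝ) (ha0 : 0 < a) (ha1 : a < 1) (hb : 0 < b)
    (htail : ∀ t > 0,
      μ {ω | max (a + b * t) (Real.sqrt (a + b * t)) ≤ |X ω|}
        ≤ ENNReal.ofReal (Real.exp (-t))) :
    ∫ ω, (X ω) ^ 4 ∂μ ≤ a ^ 2 + 2 * a * b + 2 * b ^ 2 + 16 * a ^ 3 * b + 96 * b ^ 4 := by
  have hbne : b ≠ 0 := ne_of_gt hb
  set sa := Real.sqrt a with hsa_def
  have hsa2 : sa ^ 2 = a := Real.sq_sqrt ha0.le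
  have hsa0 : 0 < sa := Real.sqrt_pos.mpr ha0
  have hsa1 : sa < 1 := by nlinarith [Real.sqrt_nonneg a]
  have hcont4 : Continuous (fun t : ℝ => 4 * t ^ 3) :=
    continuous_const.mul (continuous_pow 3)
  -- layer cake
  have layer : ∫⁻ ω, ENNReal.ofReal ((X ω) ^ 4) ∂μ
      = ∫⁻ t in Ioi (0:ℝ), μ {ω | t ≤ |X ω|} * ENNReal.ofReal (4 * t ^ 3) := by
    have key := lintegral_comp_eq_lintegral_meas_le_mul μ (f := fun ω => |X ω|)
      (g := fun t => 4 * t ^ 3) (Eventually.of_forall fun ω => abs_nonneg _)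
      hX.abs.aemeasurable (fun t _ => hcont4.intervalIntegrable _ _)
      ((ae_restrict_mem measurableSet_Ioi).mono fun t (ht : 0 < t) => by positivity)
    rw [← key]
    refine lintegral_congr fun ω => ?_
    congr 1
    rw [intervalIntegral.integral_const_mul, integral_pow]
    have : |X ω| ^ 4 = (X ω) ^ 4 := by
      rw [← abs_pow]; exact abs_of_nonneg (by positivity)
    rw [← this]; ring
  -- tail bound in the middle region
  have tail2 : ∀ t : ℝ, sa < t → t ≤ 1 →
      μ {ω | t ≤ |X ω|} ≤ ENNReal.ofReal (Real.exp ((a - t ^ 2) / b)) := by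
    intro t hta ht1
    have ht0 : 0 < t := lt_of_le_of_lt (Real.sqrt_nonneg a) hta
    have hat : a < t ^ 2 := by nlinarith [Real.sqrt_nonneg a]
    have hs : (0:ℝ) < (t ^ 2 - a) / b := div_pos (by linarith) hb
    have h := htail _ hs
    have harg : a + b * ((t ^ 2 - a) / b) = t ^ 2 := by field_simp; ring
    rw [harg, Real.sqrt_sq ht0.le, max_eq_right (by nlinarith : t ^ 2 ≤ t),
      show -((t ^ 2 - a) / b) = (a - t ^ 2) / b by ring] at h
    exact h
  -- tail bound in the top region
  have tail3 : ∀ t : ℝ, 1 < t →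
      μ {ω | t ≤ |X ω|} ≤ ENNReal.ofReal (Real.exp ((a - t) / b)) := by
    intro t ht1
    have hs : (0:ℝ) < (t - a) / b := div_pos (by linarith) hb
    have h := htail _ hs
    have harg : a + b * ((t - a) / b) = t := by field_simp; ring
    have hsq : Real.sqrt t ≤ t := by
      nlinarith [Real.sq_sqrt (show (0:ℝ) ≤ t by linarith), Real.sqrt_nonneg t]
    rw [harg, max_eq_left hsq, show -((t - a) / b) = (a - t) / b by ring] at h
    exact h
  -- piece 1
  have hI1 : ∫⁻ t in Ioc (0:ℝ) sa, μ {ω | t ≤ |X ω|} * ENNReal.ofReal (4 * t ^ 3)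
      ≤ ENNReal.ofReal (a ^ 2) := by
    have step : ∀ t ∈ Ioc (0:ℝ) sa,
        μ {ω | t ≤ |X ω|} * ENNReal.ofReal (4 * t ^ 3) ≤ ENNReal.ofReal (4 * t ^ 3) := by
      intro t _
      calc μ {ω | t ≤ |X ω|} * ENNReal.ofReal (4 * t ^ 3)
          ≤ 1 * ENNReal.ofReal (4 * t ^ 3) := mul_le_mul_left prob_le_one _
        _ = ENNReal.ofReal (4 * t ^ 3) := one_mul _
    calc ∫⁻ t in Ioc (0:ℝ) sa, μ {ω | t ≤ |X ω|} * ENNReal.ofReal (4 * t ^ 3)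
        ≤ ∫⁻ t in Ioc (0:ℝ) sa, ENNReal.ofReal (4 * t ^ 3) :=
          setLIntegral_mono' measurableSet_Ioc step
      _ = ENNReal.ofReal (∫ t in Ioc (0:ℝ) sa, 4 * t ^ 3) :=
          (ofReal_integral_eq_lintegral_ofReal hcont4.integrableOn_Ioc
            ((ae_restrict_mem measurableSet_Ioc).mono fun t ht => by
              have := ht.1; positivity)).symm
      _ = ENNReal.ofReal (a ^ 2) := by
          rw [← intervalIntegral.integral_of_le hsa0.le,
            intervalIntegral.integral_const_mul, integral_pow, ← hsa2]
          congr 1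
          ring
  -- piece 2
  have hI2 : ∫⁻ t in Ioc sa (1:ℝ), μ {ω | t ≤ |X ω|} * ENNReal.ofReal (4 * t ^ 3)
      ≤ ENNReal.ofReal (2 * a * b + 2 * b ^ 2) := by
    set g2 : ℝ → ℝ := fun t => Real.exp ((a - t ^ 2) / b) * (4 * t ^ 3) with hg2
    have hg2cont : Continuous g2 :=
      (Real.continuous_exp.comp ((continuous_const.sub (continuous_pow 2)).div_const b)).mul hcont4
    have step : ∀ t ∈ Ioc sa (1:ℝ),
        μ {ω | t ≤ |X ω|} * ENNReal.ofReal (4 * t ^ 3) ≤ ENNReal.ofReal (g2 t) := by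
      intro t ht
      calc μ {ω | t ≤ |X ω|} * ENNReal.ofReal (4 * t ^ 3)
          ≤ ENNReal.ofReal (Real.exp ((a - t ^ 2) / b)) * ENNReal.ofReal (4 * t ^ 3) :=
            mul_le_mul_left (tail2 t ht.1 ht.2) _
        _ = ENNReal.ofReal (g2 t) := (ENNReal.ofReal_mul (Real.exp_pos _).le).symm
    have hFTC : ∫ t in Ioc sa (1:ℝ), g2 t
        = (-(2 * b * 1 ^ 2 + 2 * b ^ 2) * Real.exp ((a - 1 ^ 2) / b))
          - (-(2 * b * sa ^ 2 + 2 * b ^ 2) * Real.exp ((a - sa ^ 2) / b)) := by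
      rw [← intervalIntegral.integral_of_le hsa1.le]
      refine intervalIntegral.integral_eq_sub_of_hasDerivAt
        (f := fun t : ℝ => -(2 * b * t ^ 2 + 2 * b ^ 2) * Real.exp ((a - t ^ 2) / b))
        (fun t _ => ?_) (hg2cont.intervalIntegrable _ _)
      have h1 : HasDerivAt (fun t : ℝ => (a - t ^ 2) / b) (-(2 * t) / b) t := by
        simpa using ((hasDerivAt_pow 2 t).const_sub a).div_const b
      have hexp := h1.exp
      have hpoly : HasDerivAt (fun t : ℝ => -(2 * b * t ^ 2 + 2 * b ^ 2))
          (-(2 * b * (2 * t))) t := by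
        exact (((hasDerivAt_pow 2 t).const_mul (2 * b)).add_const (2 * b ^ 2)).neg.congr_deriv
          (by norm_num)
      have := hpoly.mul hexp
      refine this.congr_deriv ?_
      field_simp [hg2]
      ring
    calc ∫⁻ t in Ioc sa (1:ℝ), μ {ω | t ≤ |X ω|} * ENNReal.ofReal (4 * t ^ 3)
        ≤ ∫⁻ t in Ioc sa (1:ℝ), ENNReal.ofReal (g2 t) :=
          setLIntegral_mono' measurableSet_Ioc step
      _ = ENNReal.ofReal (∫ t in Ioc sa (1:ℝ), g2 t) :=
          (ofReal_integral_eq_lintegral_ofReal hg2cont.integrableOn_Ioc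
            ((ae_restrict_mem measurableSet_Ioc).mono fun t ht => by
              have h0t : 0 < t := lt_of_le_of_lt (Real.sqrt_nonneg a) ht.1
              have := Real.exp_pos ((a - t ^ 2) / b)
              simp only [hg2]
              positivity)).symm
      _ ≤ ENNReal.ofReal (2 * a * b + 2 * b ^ 2) := by
          refine ENNReal.ofReal_le_ofReal ?_
          rw [hFTC, hsa2]
          have h1 := Real.exp_pos ((a - 1 ^ 2) / b)
          have h2 : Real.exp ((a - a) / b) = 1 := by simp
          rw [h2]
          nlinarith
  -- piece 3
  have hI3 : ∫⁻ t in Ioi (1:ℝ), μ {ω | t ≤ |X ω|} * ENNReal.ofReal (4 * t ^ 3)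
      ≤ ENNReal.ofReal (16 * a ^ 3 * b + 96 * b ^ 4) := by
    set g3 : ℝ → ℝ := fun t => (16 * a ^ 3 + 16 * (t - a) ^ 3) * Real.exp ((a - t) / b) with hg3
    set H : ℝ → ℝ := fun t => -(16 * a ^ 3 * b + 16 * b * (t - a) ^ 3 + 48 * b ^ 2 * (t - a) ^ 2
      + 96 * b ^ 3 * (t - a) + 96 * b ^ 4) * Real.exp ((a - t) / b) with hH
    have hderiv : ∀ t : ℝ, HasDerivAt H (g3 t) t := by
      intro t
      have h1 : HasDerivAt (fun t : ℝ => (a - t) / b) (-1 / b) t := by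
        simpa using ((hasDerivAt_id t).const_sub a).div_const b
      have hexp := h1.exp
      have hid : HasDerivAt (fun t : ℝ => t - a) 1 t := (hasDerivAt_id t).sub_const a
      have h3 := hid.pow 3
      have h2d := hid.pow 2
      have hpoly : HasDerivAt (fun t : ℝ => -(16 * a ^ 3 * b + 16 * b * (t - a) ^ 3
          + 48 * b ^ 2 * (t - a) ^ 2 + 96 * b ^ 3 * (t - a) + 96 * b ^ 4))
          (-(16 * b * ((3:ℕ) * (t - a) ^ 2 * 1) + 48 * b ^ 2 * ((2:ℕ) * (t - a) ^ 1 * 1)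
            + 96 * b ^ 3 * 1)) t := by
        have := ((((hasDerivAt_const t (16 * a ^ 3 * b)).add (h3.const_mul (16 * b))).add
          (h2d.const_mul (48 * b ^ 2))).add (hid.const_mul (96 * b ^ 3))).add_const (96 * b ^ 4)
        have := this.neg
        refine this.congr_deriv ?_
        push_cast
        ring
      have := hpoly.mul hexp
      refine this.congr_deriv ?_
      simp only [hg3]
      field_simp
      ring
    have htendH : Tendsto H atTop (𝓝 0) := by
      have hu : Tendsto (fun t : ℝ => (t - a) / b) atTop atTop := by
        apply Tendsto.atTop_div_const hb
        exact tendsto_atTop_add_const_right atTop (-a) tendsto_id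
      have hk : ∀ k : ℕ, Tendsto
          (fun t : ℝ => ((t - a) / b) ^ k * Real.exp (-((t - a) / b))) atTop (𝓝 0) :=
        fun k => (Real.tendsto_pow_mul_exp_neg_atTop_nhds_zero k).comp hu
      have hcomb := ((((hk 0).const_mul (-(16 * a ^ 3 * b + 96 * b ^ 4))).add
        ((hk 1).const_mul (-(96 * b ^ 4)))).add
        ((hk 2).const_mul (-(48 * b ^ 4)))).add ((hk 3).const_mul (-(16 * b ^ 4)))
      simp only [mul_zero, add_zero] at hcomb
      refine hcomb.congr fun t => ?_
      simp only [hH]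
      have he : Real.exp (-((t - a) / b)) = Real.exp ((a - t) / b) := by ring_nf
      rw [he]
      field_simp
      ring
    have hg3nn : ∀ t ∈ Ioi a, 0 ≤ g3 t := by
      intro t ht
      have hta : 0 ≤ t - a := by simp only [mem_Ioi] at ht; linarith
      have := Real.exp_pos ((a - t) / b)
      simp only [hg3]
      positivity
    have hint : IntegrableOn g3 (Ioi a) :=
      integrableOn_Ioi_deriv_of_nonneg' (fun t _ => hderiv t) hg3nn htendH
    have hval : ∫ t in Ioi a, g3 t = 16 * a ^ 3 * b + 96 * b ^ 4 := by
      rw [integral_Ioi_of_hasDerivAt_of_nonneg' (fun t _ => hderiv t) hg3nn htendH]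
      simp only [hH]
      simp [Real.exp_zero]
    have step : ∀ t ∈ Ioi (1:ℝ),
        μ {ω | t ≤ |X ω|} * ENNReal.ofReal (4 * t ^ 3) ≤ ENNReal.ofReal (g3 t) := by
      intro t ht
      simp only [mem_Ioi] at ht
      have h4 : 4 * t ^ 3 ≤ 16 * a ^ 3 + 16 * (t - a) ^ 3 := by
        have := cube_add_le_aux a (t - a) ha0.le (by linarith)
        have h' : a + (t - a) = t := by ring
        rw [h'] at this
        linarith
      calc μ {ω | t ≤ |X ω|} * ENNReal.ofReal (4 * t ^ 3)
          ≤ ENNReal.ofReal (Real.exp ((a - t) / b)) * ENNReal.ofReal (4 * t ^ 3) :=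
            mul_le_mul_left (tail3 t ht) _
        _ ≤ ENNReal.ofReal (Real.exp ((a - t) / b))
              * ENNReal.ofReal (16 * a ^ 3 + 16 * (t - a) ^ 3) :=
            mul_le_mul_right (ENNReal.ofReal_le_ofReal h4) _
        _ = ENNReal.ofReal (g3 t) := by
            rw [← ENNReal.ofReal_mul (Real.exp_pos _).le]
            simp only [hg3]
            congr 1
            ring
    calc ∫⁻ t in Ioi (1:ℝ), μ {ω | t ≤ |X ω|} * ENNReal.ofReal (4 * t ^ 3)
        ≤ ∫⁻ t in Ioi (1:ℝ), ENNReal.ofReal (g3 t) :=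
          setLIntegral_mono' measurableSet_Ioi step
      _ ≤ ∫⁻ t in Ioi a, ENNReal.ofReal (g3 t) :=
          lintegral_mono_set (Ioi_subset_Ioi ha1.le)
      _ = ENNReal.ofReal (∫ t in Ioi a, g3 t) :=
          (ofReal_integral_eq_lintegral_ofReal hint
            ((ae_restrict_mem measurableSet_Ioi).mono hg3nn)).symm
      _ = ENNReal.ofReal (16 * a ^ 3 * b + 96 * b ^ 4) := by rw [hval]
  -- assemble
  have hsplit : Ioi (0:ℝ) = (Ioc (0:ℝ) sa ∪ Ioc sa 1) ∪ Ioi (1:ℝ) := by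
    rw [Ioc_union_Ioc_eq_Ioc hsa0.le hsa1.le, Ioc_union_Ioi_eq_Ioi zero_le_one]
  have hdisj1 : Disjoint (Ioc (0:ℝ) sa) (Ioc sa 1) := by
    refine Set.disjoint_left.mpr fun x hx hx' => ?_
    exact absurd hx'.1 (not_lt.mpr hx.2)
  have hdisj2 : Disjoint (Ioc (0:ℝ) sa ∪ Ioc sa 1) (Ioi (1:ℝ)) := by
    refine Set.disjoint_left.mpr fun x hx hx' => ?_
    simp only [mem_Ioi] at hx'
    rcases hx with hx | hx
    · exact absurd hx.2 (not_le.mpr (lt_trans hsa1 hx'))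
    · exact absurd hx.2 (not_le.mpr hx')
  have hmain : ∫⁻ t in Ioi (0:ℝ), μ {ω | t ≤ |X ω|} * ENNReal.ofReal (4 * t ^ 3)
      ≤ ENNReal.ofReal (a ^ 2 + 2 * a * b + 2 * b ^ 2 + 16 * a ^ 3 * b + 96 * b ^ 4) := by
    rw [hsplit, lintegral_union measurableSet_Ioi hdisj2,
      lintegral_union measurableSet_Ioc hdisj1]
    have hsum := add_le_add (add_le_add hI1 hI2) hI3
    refine le_trans hsum ?_
    rw [← ENNReal.ofReal_add (by positivity) (by positivity),
      ← ENNReal.ofReal_add (by positivity) (by positivity)]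
    refine ENNReal.ofReal_le_ofReal ?_
    exact le_of_eq (by ring)
  have hRHSnn : (0:ℝ) ≤ a ^ 2 + 2 * a * b + 2 * b ^ 2 + 16 * a ^ 3 * b + 96 * b ^ 4 := by
    positivity
  rw [integral_eq_lintegral_of_nonneg_ae (Eventually.of_forall fun ω => by positivity)
    ((hX.pow_const 4).aestronglyMeasurable)]
  calc (∫⁻ ω, ENNReal.ofReal ((X ω) ^ 4) ∂μ).toReal
      ≤ (ENNReal.ofReal (a ^ 2 + 2 * a * b + 2 * b ^ 2 + 16 * a ^ 3 * b + 96 * b ^ 4)).toReal :=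
        ENNReal.toReal_mono ENNReal.ofReal_ne_top (by rw [layer]; exact hmain)
    _ = a ^ 2 + 2 * a * b + 2 * b ^ 2 + 16 * a ^ 3 * b + 96 * b ^ 4 :=
        ENNReal.toReal_ofReal hRHSnn
end

section
/- With ψ(Θ)=Θ(ΘᵀΘ)^{-1}Θᵀ and ∇ψ(Θ)(Y) = P⊥ Y (ΘᵀΘ)^{-1}Θᵀ + Θ(ΘᵀΘ)^{-1}Yᵀ P⊥ where P⊥ = I_p − ψ(Θ), the adjoint ∇ψ(Θ)*: R^{p×p} → R^{p×r} with respect to the Frobenius inner product is given by ∇ψ(Θ)*(M) = P⊥ (M + Mᵀ) Θ (ΘᵀΘ)^{-1}. -/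
open Matrix

/-- The adjoint of `∇ψ(Θ) : Y ↦ P⊥ Y (ΘᵀΘ)⁻¹Θᵀ + Θ(ΘᵀΘ)⁻¹Yᵀ P⊥` with respect to the
Frobenius inner product `⟨A,B⟩ = tr(AᵀB)` is `M ↦ P⊥ (M + Mᵀ) Θ (ΘᵀΘ)⁻¹`,
where `P⊥ = I − Θ(ΘᵀΘ)⁻¹Θᵀ`. -/
theorem adjoint_fderiv_projection_map (p r : ℕ) (Θ : Matrix (Fin p) (Fin r) ℝ)
    (hΘ : IsUnit (Θᵀ * Θ).det) :
    ∀ (M : Matrix (Fin p) (Fin p) ℝ) (Y : Matrix (Fin p) (Fin r) ℝ),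
      Matrix.trace (((1 - Θ * (Θᵀ * Θ)⁻¹ * Θᵀ) * (M + Mᵀ) * Θ * (Θᵀ * Θ)⁻¹)ᵀ * Y)
        = Matrix.trace (Mᵀ *
            ((1 - Θ * (Θᵀ * Θ)⁻¹ * Θᵀ) * Y * (Θᵀ * Θ)⁻¹ * Θᵀ
              + Θ * (Θᵀ * Θ)⁻¹ * Yᵀ * (1 - Θ * (Θᵀ * Θ)⁻¹ * Θᵀ))) := by
  intro M Y
  have hS : ((Θᵀ * Θ)⁻¹)ᵀ = (Θᵀ * Θ)⁻¹ := by
    rw [Matrix.transpose_nonsing_inv, Matrix.transpose_mul, Matrix.transpose_transpose]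
  set S := (Θᵀ * Θ)⁻¹ with hSdef
  set P : Matrix (Fin p) (Fin p) ℝ := 1 - Θ * S * Θᵀ with hPdef
  have hP : Pᵀ = P := by
    simp [hPdef, Matrix.transpose_sub, Matrix.transpose_mul, hS, Matrix.mul_assoc]
  have key1 : trace (S * (Θᵀ * (Mᵀ * (P * Y)))) = trace (Mᵀ * (P * Y * S * Θᵀ)) := by
    rw [show S * (Θᵀ * (Mᵀ * (P * Y))) = (S * Θᵀ) * (Mᵀ * (P * Y)) by
        simp [Matrix.mul_assoc],
      Matrix.trace_mul_comm]
    simp [Matrix.mul_assoc]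
  have key2 : trace (S * (Θᵀ * (M * (P * Y)))) = trace (Mᵀ * (Θ * S * Yᵀ * P)) := by
    rw [← Matrix.trace_transpose (S * (Θᵀ * (M * (P * Y))))]
    simp only [Matrix.transpose_mul, hS, hP, Matrix.transpose_transpose]
    rw [show Yᵀ * P * Mᵀ * Θ * S = (Yᵀ * P) * (Mᵀ * Θ * S) by simp [Matrix.mul_assoc],
      Matrix.trace_mul_comm]
    simp [Matrix.mul_assoc]
  simp only [Matrix.transpose_mul, hS, hP, Matrix.transpose_add, Matrix.transpose_transpose,
    Matrix.mul_add, Matrix.add_mul, Matrix.trace_add, Matrix.mul_assoc]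
  rw [key1, key2]
  simp [Matrix.mul_assoc]
end

section
/- Let Θ ∈ R^{p×r} have full column rank, let U = Θ(ΘᵀΘ)^{-1/2} (so UᵀU = I_r) and U⊥ be an orthonormal complement. For the linear maps ∇ψ(Θ)(Y) = U⊥U⊥ᵀ Y W^{-1/2} Uᵀ + U W^{-1/2} Yᵀ U⊥U⊥ᵀ and ∇ψ(Θ)*(M) = U⊥U⊥ᵀ(M+Mᵀ)U W^{-1/2} with W = ΘᵀΘ, the trace of the composed self-adjoint operator satisfies tr(∇ψ(Θ) ∘ ∇ψ(Θ)*) = 2(p−r)·tr(W^{-1}), where the trace of an operator L: R^{p×p}→R^{p×p} is ∑_{i,j} ⟨L(e_i e_jᵀ), e_i e_jᵀ⟩. -/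
open Matrix

private lemma entry_mul_std_mul {p : ℕ} (X Y : Matrix (Fin p) (Fin p) ℝ) (a b c d : Fin p) :
    (X * Matrix.single a b (1:ℝ) * Y) c d = X c a * Y b d := by
  simp [Matrix.mul_apply, Matrix.single, ite_and, Finset.sum_ite_eq,
    Finset.sum_ite_eq']

private lemma trace_mul_std {p : ℕ} (X : Matrix (Fin p) (Fin p) ℝ) (i j : Fin p) :
    Matrix.trace (X * Matrix.single i j (1:ℝ)) = X j i := by
  simp [Matrix.trace, Matrix.diag, Matrix.mul_apply, Matrix.single, ite_and,
    Finset.sum_ite_eq, Finset.sum_ite_eq']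

private lemma std_transpose {p : ℕ} (i j : Fin p) :
    (Matrix.single i j (1:ℝ))ᵀ = Matrix.single j i (1:ℝ) := by
  ext a b
  simp [Matrix.single, Matrix.transpose_apply, and_comm]

/-- With `U ∈ O^{p×r}`, `U⊥` an orthonormal complement, `W = ΘᵀΘ` positive (invertible) and
`S = W^{-1/2}` (a symmetric matrix with `S·S = W⁻¹`), the operator trace of
`∇ψ(Θ) ∘ ∇ψ(Θ)*`, where `∇ψ(Θ)(Y) = U⊥U⊥ᵀ Y S Uᵀ + U S Yᵀ U⊥U⊥ᵀ` and
`∇ψ(Θ)*(M) = U⊥U⊥ᵀ(M+Mᵀ)U S`, computed as `∑_{i,j} ⟨L(e_i e_jᵀ), e_i e_jᵀ⟩_F`,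
equals `2(p−r)·tr(W⁻¹)`. -/
theorem trace_fderiv_comp_adjoint (p r : ℕ) (hrp : r ≤ p)
    (U : Matrix (Fin p) (Fin r) ℝ) (Uperp : Matrix (Fin p) (Fin (p - r)) ℝ)
    (W S : Matrix (Fin r) (Fin r) ℝ)
    (hU : Uᵀ * U = 1) (hUperp : Uperpᵀ * Uperp = 1)
    (horth : Uᵀ * Uperp = 0) (hcomplete : U * Uᵀ + Uperp * Uperpᵀ = 1)
    (hW : IsUnit W.det) (hS : Sᵀ = S) (hSS : S * S = W⁻¹) :
    ∑ i : Fin p, ∑ j : Fin p,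
        Matrix.trace
          ((Uperp * Uperpᵀ *
              ((Uperp * Uperpᵀ * (Matrix.single i j (1:ℝ) + (Matrix.single i j (1:ℝ))ᵀ) * U * S)
                * S * Uᵀ)
            + U * S *
              ((Uperp * Uperpᵀ * (Matrix.single i j (1:ℝ) + (Matrix.single i j (1:ℝ))ᵀ) * U * S)ᵀ)
                * Uperp * Uperpᵀ)ᵀ
          * Matrix.single i j (1:ℝ))
      = 2 * ((p : ℝ) - r) * Matrix.trace W⁻¹ := by
  have hUperp' : ∀ X : Matrix (Fin (p-r)) (Fin p) ℝ, Uperpᵀ * (Uperp * X) = X := fun X => by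
    rw [← Matrix.mul_assoc, hUperp, Matrix.one_mul]
  have hU' : ∀ X : Matrix (Fin r) (Fin p) ℝ, Uᵀ * (U * X) = X := fun X => by
    rw [← Matrix.mul_assoc, hU, Matrix.one_mul]
  -- key per-summand identity
  have key : ∀ i j : Fin p,
      Matrix.trace
          ((Uperp * Uperpᵀ *
              ((Uperp * Uperpᵀ * (Matrix.single i j (1:ℝ) + (Matrix.single i j (1:ℝ))ᵀ) * U * S)
                * S * Uᵀ)
            + U * S *
              ((Uperp * Uperpᵀ * (Matrix.single i j (1:ℝ) + (Matrix.single i j (1:ℝ))ᵀ) * U * S)ᵀ)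
                * Uperp * Uperpᵀ)ᵀ
          * Matrix.single i j (1:ℝ))
        = (Uperp * Uperpᵀ) j j * (U * (S * S) * Uᵀ) i i
          + (Uperp * Uperpᵀ) j i * (U * (S * S) * Uᵀ) j i
          + (U * (S * S) * Uᵀ) j j * (Uperp * Uperpᵀ) i i
          + (U * (S * S) * Uᵀ) j i * (Uperp * Uperpᵀ) j i := by
    intro i j
    set A : Matrix (Fin p) (Fin p) ℝ :=
      Matrix.single i j (1:ℝ) + (Matrix.single i j (1:ℝ))ᵀ with hA
    have hAt : Aᵀ = A := by rw [hA]; simp [Matrix.transpose_add, add_comm]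
    have hmat :
        (Uperp * Uperpᵀ * (Uperp * Uperpᵀ * A * U * S * S * Uᵀ)
          + U * S * (Uperp * Uperpᵀ * A * U * S)ᵀ * Uperp * Uperpᵀ)ᵀ
          = U * (S * S) * Uᵀ * A * (Uperp * Uperpᵀ)
            + Uperp * Uperpᵀ * A * (U * (S * S) * Uᵀ) := by
      simp only [Matrix.transpose_add, Matrix.transpose_mul, Matrix.transpose_transpose,
        hS, hAt, Matrix.mul_assoc, hUperp', hU']
    rw [hmat, trace_mul_std]
    simp only [Matrix.add_apply]
    have hQ : U * (S * S) * Uᵀ * A * (Uperp * Uperpᵀ)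
        = U * (S * S) * Uᵀ * Matrix.single i j (1:ℝ) * (Uperp * Uperpᵀ)
          + U * (S * S) * Uᵀ * Matrix.single j i (1:ℝ) * (Uperp * Uperpᵀ) := by
      rw [hA, std_transpose, Matrix.mul_add, Matrix.add_mul]
    have hQ2 : Uperp * Uperpᵀ * A * (U * (S * S) * Uᵀ)
        = Uperp * Uperpᵀ * Matrix.single i j (1:ℝ) * (U * (S * S) * Uᵀ)
          + Uperp * Uperpᵀ * Matrix.single j i (1:ℝ) * (U * (S * S) * Uᵀ) := by
      rw [hA, std_transpose, Matrix.mul_add, Matrix.add_mul]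
    rw [hQ, hQ2]
    simp only [Matrix.add_apply]
    rw [entry_mul_std_mul, entry_mul_std_mul, entry_mul_std_mul, entry_mul_std_mul]
    ring
  rw [Finset.sum_congr rfl fun i _ => Finset.sum_congr rfl fun j _ => key i j]
  -- now compute the four double sums
  have hQP : (U * (S * S) * Uᵀ) * (Uperp * Uperpᵀ) = 0 := by
    rw [Matrix.mul_assoc, Matrix.mul_assoc, ← Matrix.mul_assoc Uᵀ, horth,
      Matrix.zero_mul, Matrix.mul_zero, Matrix.mul_zero]
  have htrP : Matrix.trace (Uperp * Uperpᵀ) = ((p : ℝ) - r) := by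
    rw [Matrix.trace_mul_comm, hUperp, Matrix.trace_one]
    simp [Nat.cast_sub hrp]
  have htrQ : Matrix.trace (U * (S * S) * Uᵀ) = Matrix.trace W⁻¹ := by
    rw [Matrix.trace_mul_comm, ← Matrix.mul_assoc, hU, Matrix.one_mul, hSS]
  simp only [Finset.sum_add_distrib]
  have etrP : (∑ i : Fin p, (Uperp * Uperpᵀ) i i) = ((p:ℝ) - r) := htrP
  have etrQ : (∑ i : Fin p, (U * (S * S) * Uᵀ) i i) = Matrix.trace W⁻¹ := htrQ
  have s1 : ∑ i : Fin p, ∑ j : Fin p, (Uperp * Uperpᵀ) j j * (U * (S * S) * Uᵀ) i i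
      = ((p:ℝ) - r) * Matrix.trace W⁻¹ := by
    simp_rw [← Finset.sum_mul]
    rw [etrP, ← Finset.mul_sum, etrQ]
  have s2 : ∑ i : Fin p, ∑ j : Fin p, (U * (S * S) * Uᵀ) j j * (Uperp * Uperpᵀ) i i
      = ((p:ℝ) - r) * Matrix.trace W⁻¹ := by
    simp_rw [← Finset.sum_mul]
    rw [etrQ, ← Finset.mul_sum, etrP]; ring
  have s3 : ∑ i : Fin p, ∑ j : Fin p, (Uperp * Uperpᵀ) j i * (U * (S * S) * Uᵀ) j i = 0 := by
    have h : ∀ i : Fin p, ∑ j : Fin p, (Uperp * Uperpᵀ) j i * (U * (S * S) * Uᵀ) j i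
        = ((Uperp * Uperpᵀ)ᵀ * (U * (S * S) * Uᵀ)) i i := by
      intro i; simp [Matrix.mul_apply, Matrix.transpose_apply, mul_comm]
    rw [Finset.sum_congr rfl fun i _ => h i]
    have hPt : (Uperp * Uperpᵀ)ᵀ = Uperp * Uperpᵀ := by
      rw [Matrix.transpose_mul, Matrix.transpose_transpose]
    have h0 : Uperpᵀ * U = 0 := by
      have := congrArg Matrix.transpose horth
      simpa using this
    have hPQ : (Uperp * Uperpᵀ) * (U * (S * S) * Uᵀ) = 0 := by
      have e : Uperp * Uperpᵀ * (U * (S * S) * Uᵀ)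
          = Uperp * (Uperpᵀ * U) * (S * S * Uᵀ) := by
        simp [Matrix.mul_assoc]
      rw [e, h0, Matrix.mul_zero, Matrix.zero_mul]
    rw [hPt, hPQ]
    simp
  have s4 : ∑ i : Fin p, ∑ j : Fin p, (U * (S * S) * Uᵀ) j i * (Uperp * Uperpᵀ) j i = 0 := by
    rw [← s3]
    congr 1; funext i
    exact Finset.sum_congr rfl fun j _ => mul_comm _ _
  rw [s1, s2, s3, s4]; ring
end

section
/- Fix l ≥ 2 and 1 ≤ i_1 < i_2 ≤ l. Define I_1 = {j ∈ [m]^l : j_{i_1} ≠ j_{i_2} and {j_{i_1}, j_{i_2}} is disjoint from the multiset of the other l−2 coordinates}. Then |I_1| = m(m−1)(m−2)^{l−2} (for m ≥ 2), and its complement I_2 = [m]^l \ I_1 satisfies, for any nonnegative weights v_1,...,v_m: ∑_{j ∈ I_2} v_{j_1}···v_{j_l} ≤ 2l (∑_{k=1}^m v_k²)(∑_{k=1}^m v_k)^{l−2}. -/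
open Finset

private lemma prod_split {l : ℕ} {M : Type*} [CommMonoid M] (a b : Fin l) (hab : a ≠ b)
    (f : Fin l → M) : ∏ k, f k = f a * f b * ∏ k ∈ univ \ {a, b}, f k := by
  rw [← Finset.prod_sdiff (Finset.subset_univ {a, b}), Finset.prod_pair hab]
  exact (mul_comm _ _)

private lemma card_sdiff_pair {l : ℕ} (a b : Fin l) (hab : a ≠ b) :
    (univ \ ({a, b} : Finset (Fin l))).card = l - 2 := by
  rw [card_sdiff_of_subset (subset_univ _), card_univ, Fintype.card_fin, card_pair hab]

private lemma sum_pair_eq {m l : ℕ} (a b : Fin l) (hab : a ≠ b) (v : Fin m → ℝ) :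
    ∑ j ∈ univ.filter (fun j : Fin l → Fin m => j a = j b), ∏ k, v (j k)
      = (∑ k, v k ^ 2) * (∑ k, v k) ^ (l - 2) := by
  classical
  rw [← Finset.sum_fiberwise_of_maps_to (g := fun j : Fin l → Fin m => j a)
      (t := (univ : Finset (Fin m))) (fun x _ => mem_univ _)]
  have h1 : ∀ x : Fin m,
      (univ.filter (fun j : Fin l → Fin m => j a = j b)).filter (fun j => j a = x)
        = Fintype.piFinset (fun k => if k = a then {x} else if k = b then ({x} : Finset (Fin m)) else univ) := by
    intro x
    ext j
    simp only [mem_filter, mem_univ, true_and, Fintype.mem_piFinset]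
    constructor
    · rintro ⟨h1, h2⟩ k
      by_cases hk : k = a
      · subst hk; simp [h2]
      · by_cases hk' : k = b
        · subst hk'; simp [hk, ← h1, h2]
        · simp [hk, hk']
    · intro h
      have ha := h a
      have hb := h b
      rw [if_pos rfl] at ha
      rw [if_neg (Ne.symm hab), if_pos rfl] at hb
      simp only [mem_singleton] at ha hb
      exact ⟨ha.trans hb.symm, ha⟩
  have h2 : ∀ x : Fin m,
      ∑ j ∈ (univ.filter (fun j : Fin l → Fin m => j a = j b)).filter (fun j => j a = x),
        ∏ k, v (j k) = v x * v x * (∑ k, v k) ^ (l - 2) := by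
    intro x
    rw [h1 x, ← Finset.prod_univ_sum]
    rw [prod_split a b hab]
    rw [if_pos rfl, if_neg (Ne.symm hab), if_pos rfl]
    simp only [sum_singleton]
    congr 1
    rw [Finset.prod_congr rfl (fun k hk => ?_), Finset.prod_const, card_sdiff_pair a b hab]
    simp only [mem_sdiff, mem_insert, mem_singleton, not_or, mem_univ, true_and] at hk
    rw [if_neg hk.1, if_neg hk.2]
  calc ∑ x : Fin m, ∑ j ∈ (univ.filter (fun j : Fin l → Fin m => j a = j b)).filter
          (fun j => j a = x), ∏ k, v (j k)
      = ∑ x : Fin m, v x * v x * (∑ k, v k) ^ (l - 2) := by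
        exact Finset.sum_congr rfl fun x _ => h2 x
    _ = (∑ k, v k ^ 2) * (∑ k, v k) ^ (l - 2) := by
        rw [← Finset.sum_mul]
        congr 1
        exact Finset.sum_congr rfl fun x _ => by ring

private lemma sum_union_le {β : Type*} [DecidableEq β] (s t : Finset β) (f : β → ℝ)
    (hf : ∀ x, 0 ≤ f x) : ∑ x ∈ s ∪ t, f x ≤ ∑ x ∈ s, f x + ∑ x ∈ t, f x := by
  have := Finset.sum_union_inter (s₁ := s) (s₂ := t) (f := f)
  have h0 : 0 ≤ ∑ x ∈ s ∩ t, f x := Finset.sum_nonneg fun x _ => hf x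
  linarith

private lemma sum_biUnion_le' {α β : Type*} [DecidableEq β] (s : Finset α) (t : α → Finset β)
    (f : β → ℝ) (hf : ∀ x, 0 ≤ f x) :
    ∑ x ∈ s.biUnion t, f x ≤ ∑ a ∈ s, ∑ x ∈ t a, f x := by
  classical
  induction s using Finset.induction_on with
  | empty => simp
  | insert _ _ ha ih =>
    rename_i a s
    rw [Finset.biUnion_insert, Finset.sum_insert ha]
    calc ∑ x ∈ t a ∪ s.biUnion t, f x ≤ ∑ x ∈ t a, f x + ∑ x ∈ s.biUnion t, f x :=
          sum_union_le _ _ f hf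
      _ ≤ _ := by linarith

/-- For `m ≥ 2`, `l ≥ 2` and fixed positions `i₁ < i₂` in `Fin l`, the set
`I₁ = {j ∈ [m]^l : j i₁ ≠ j i₂ and {j i₁, j i₂} avoids all other coordinates}`
has cardinality `m(m−1)(m−2)^{l−2}`, and its complement `I₂` satisfies, for any
nonnegative weights `v`, `∑_{j ∈ I₂} ∏_k v (j k) ≤ 2l (∑ v²)(∑ v)^{l−2}`. -/
theorem good_index_tuples_card_and_complement_bound
    (m l : ℕ) (hm : 2 ≤ m) (hl : 2 ≤ l) (i₁ i₂ : Fin l) (h12 : i₁ < i₂)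
    (v : Fin m → ℝ) (hv : ∀ k, 0 ≤ v k) :
    ((Finset.univ.filter (fun j : Fin l → Fin m =>
        j i₁ ≠ j i₂ ∧ ∀ k, k ≠ i₁ → k ≠ i₂ → j k ≠ j i₁ ∧ j k ≠ j i₂)).card
      = m * (m - 1) * (m - 2) ^ (l - 2))
    ∧ (∑ j ∈ Finset.univ \ (Finset.univ.filter (fun j : Fin l → Fin m =>
          j i₁ ≠ j i₂ ∧ ∀ k, k ≠ i₁ → k ≠ i₂ → j k ≠ j i₁ ∧ j k ≠ j i₂)),
        ∏ k, v (j k)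
      ≤ 2 * l * (∑ k, (v k) ^ 2) * (∑ k, v k) ^ (l - 2)) := by
  classical
  have hne : i₁ ≠ i₂ := ne_of_lt h12
  set G := Finset.univ.filter (fun j : Fin l → Fin m =>
      j i₁ ≠ j i₂ ∧ ∀ k, k ≠ i₁ → k ≠ i₂ → j k ≠ j i₁ ∧ j k ≠ j i₂) with hG
  constructor
  · -- cardinality
    rw [Finset.card_eq_sum_card_fiberwise (f := fun j : Fin l → Fin m => (j i₁, j i₂))
        (t := Finset.univ.offDiag) ?_]
    · have hfib : ∀ p ∈ (Finset.univ : Finset (Fin m)).offDiag,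
          (G.filter (fun j => (j i₁, j i₂) = p)).card = (m - 2) ^ (l - 2) := by
        rintro ⟨x, y⟩ hp
        have hxy : x ≠ y := (Finset.mem_offDiag.1 hp).2.2
        have heq : G.filter (fun j => (j i₁, j i₂) = (x, y))
            = Fintype.piFinset (fun k => if k = i₁ then {x} else if k = i₂ then ({y} : Finset (Fin m))
                else univ \ {x, y}) := by
          ext j
          simp only [hG, mem_filter, mem_univ, true_and, Fintype.mem_piFinset, Prod.mk.injEq]
          constructor
          · rintro ⟨⟨h1, h2⟩, h3, h4⟩ k
            by_cases hk : k = i₁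
            · subst hk; simp [h3]
            · by_cases hk' : k = i₂
              · subst hk'; simp [hk, h4]
              · have := h2 k hk hk'
                simp [hk, hk', h3 ▸ this.1, h4 ▸ this.2]
          · intro h
            have ha := h i₁
            have hb := h i₂
            rw [if_pos rfl] at ha
            rw [if_neg (Ne.symm hne), if_pos rfl] at hb
            simp only [mem_singleton] at ha hb
            refine ⟨⟨?_, fun k hk hk' => ?_⟩, ha, hb⟩
            · rw [ha, hb]; exact hxy
            · have hc := h k
              rw [if_neg hk, if_neg hk'] at hc
              simp only [mem_sdiff, mem_univ, true_and, mem_insert, mem_singleton, not_or] at hc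
              rw [ha, hb]
              exact hc
        rw [heq, Fintype.card_piFinset]
        rw [prod_split i₁ i₂ hne]
        rw [if_pos rfl, if_neg (Ne.symm hne), if_pos rfl]
        simp only [card_singleton, one_mul]
        rw [Finset.prod_congr rfl (fun k hk => ?_), Finset.prod_const, card_sdiff_pair i₁ i₂ hne]
        simp only [mem_sdiff, mem_insert, mem_singleton, not_or, mem_univ, true_and] at hk
        rw [if_neg hk.1, if_neg hk.2, card_sdiff_of_subset (subset_univ _), card_univ,
          Fintype.card_fin, card_pair hxy]
      rw [Finset.sum_congr rfl hfib, Finset.sum_const, Finset.offDiag_card, card_univ,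
        Fintype.card_fin, smul_eq_mul, Nat.mul_sub, mul_one]
    · intro j hj
      rw [hG, Finset.mem_coe, mem_filter] at hj
      exact Finset.mem_offDiag.2 ⟨mem_univ _, mem_univ _, hj.2.1⟩
  · -- sum bound
    set E := (∑ k, (v k) ^ 2) * (∑ k, v k) ^ (l - 2) with hE
    have hE0 : 0 ≤ E := by
      apply mul_nonneg
      · exact Finset.sum_nonneg fun k _ => sq_nonneg _
      · exact pow_nonneg (Finset.sum_nonneg fun k _ => hv k) _
    have hf0 : ∀ j : Fin l → Fin m, 0 ≤ ∏ k, v (j k) :=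
      fun j => Finset.prod_nonneg fun k _ => hv (j k)
    set S := (univ \ ({i₁, i₂} : Finset (Fin l))) with hS
    set T : Fin l → Finset (Fin l → Fin m) := fun k =>
      univ.filter (fun j : Fin l → Fin m => j k = j i₁) ∪
      univ.filter (fun j : Fin l → Fin m => j k = j i₂) with hT
    have hsub : univ \ G ⊆ univ.filter (fun j : Fin l → Fin m => j i₁ = j i₂) ∪ S.biUnion T := by
      intro j hj
      rw [mem_sdiff, hG, mem_filter] at hj
      have hj' := hj.2
      push_neg at hj'
      by_cases hc : j i₁ = j i₂
      · exact Finset.mem_union_left _ (mem_filter.2 ⟨mem_univ _, hc⟩)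
      · obtain ⟨k, hk1, hk2, hk3⟩ := hj' (mem_univ j) hc
        refine Finset.mem_union_right _ (Finset.mem_biUnion.2 ⟨k, ?_, ?_⟩)
        · rw [hS, mem_sdiff]
          simp [hk1, hk2]
        · rw [hT]
          by_cases h : j k = j i₁
          · exact Finset.mem_union_left _ (mem_filter.2 ⟨mem_univ _, h⟩)
          · exact Finset.mem_union_right _ (mem_filter.2 ⟨mem_univ _, hk3 h⟩)
    have step1 : ∑ j ∈ univ \ G, ∏ k, v (j k)
        ≤ ∑ j ∈ (univ.filter (fun j : Fin l → Fin m => j i₁ = j i₂) ∪ S.biUnion T),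
            ∏ k, v (j k) :=
      Finset.sum_le_sum_of_subset_of_nonneg hsub (fun j _ _ => hf0 j)
    have step2 : ∑ j ∈ (univ.filter (fun j : Fin l → Fin m => j i₁ = j i₂) ∪ S.biUnion T),
        ∏ k, v (j k) ≤ E + ∑ k ∈ S, ∑ j ∈ T k, ∏ k', v (j k') := by
      calc _ ≤ ∑ j ∈ univ.filter (fun j : Fin l → Fin m => j i₁ = j i₂), ∏ k, v (j k)
              + ∑ j ∈ S.biUnion T, ∏ k, v (j k) := sum_union_le _ _ _ hf0
        _ ≤ E + ∑ k ∈ S, ∑ j ∈ T k, ∏ k', v (j k') := by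
            rw [sum_pair_eq i₁ i₂ hne v]
            exact add_le_add le_rfl (sum_biUnion_le' _ _ _ hf0)
    have step3 : ∀ k ∈ S, ∑ j ∈ T k, ∏ k', v (j k') ≤ 2 * E := by
      intro k hk
      rw [hS, mem_sdiff] at hk
      simp only [mem_insert, mem_singleton, not_or] at hk
      calc ∑ j ∈ T k, ∏ k', v (j k')
          ≤ ∑ j ∈ univ.filter (fun j : Fin l → Fin m => j k = j i₁), ∏ k', v (j k')
            + ∑ j ∈ univ.filter (fun j : Fin l → Fin m => j k = j i₂), ∏ k', v (j k') :=
            sum_union_le _ _ _ hf0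
        _ = 2 * E := by
            rw [sum_pair_eq k i₁ hk.2.1 v, sum_pair_eq k i₂ hk.2.2 v]
            ring
    have hScard : S.card = l - 2 := card_sdiff_pair i₁ i₂ hne
    have step4 : ∑ k ∈ S, ∑ j ∈ T k, ∏ k', v (j k') ≤ (l - 2 : ℕ) * (2 * E) := by
      calc _ ≤ ∑ _k ∈ S, 2 * E := Finset.sum_le_sum step3
        _ = (l - 2 : ℕ) * (2 * E) := by rw [Finset.sum_const, hScard, nsmul_eq_mul]
    have hcast : ((l - 2 : ℕ) : ℝ) = (l : ℝ) - 2 := by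
      rw [Nat.cast_sub hl]; norm_num
    have hl2 : (2 : ℝ) ≤ (l : ℝ) := by exact_mod_cast hl
    calc ∑ j ∈ univ \ G, ∏ k, v (j k) ≤ E + (l - 2 : ℕ) * (2 * E) := by
          refine step1.trans (step2.trans ?_); linarith
      _ ≤ 2 * l * (∑ k, (v k) ^ 2) * (∑ k, v k) ^ (l - 2) := by
          rw [hcast]
          have : 2 * (l : ℝ) * (∑ k, (v k) ^ 2) * (∑ k, v k) ^ (l - 2) = 2 * l * E := by
            rw [hE]; ring
          rw [this]
          nlinarith
end
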